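/- Let Λ be a directed set, G a Λ-inverse system of abelian groups, and C ⊆ Λ a cofinal linearly ordered (well-ordered) subset. Every coherent element x of (G restricted to C)^{(n)} extends to a coherent element z of G^{(n)} with z restricted to C^{(n)} equal to x. The extension is given by z_{λ_0,…,λ_n} = p^{s(λ_0)}_{λ_0}(x_{s(λ_0),…,s(λ_n)}) where s(λ) is the least element of C above λ. -/

import Mathlib

/-!
Statement 0: For any directed set Λ and Λ-inverse system of abelian groups G,
the composition of consecutive coboundary maps vanishes: δ^{n+1} ∘ δ^n = 0.
-/

universe u v

/-- A `Λ`-inverse system of abelian groups. -/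
structure InvSys (Λ : Type u) [Preorder Λ] : Type (max u (v + 1)) where
  G : Λ → Type v
  inst : ∀ a, AddCommGroup (G a)
  p : ∀ {a b : Λ}, a ≤ b → G b →+ G a
  p_refl : ∀ (a : Λ) (h : a ≤ a) (x : G a), p h x = x
  p_comp : ∀ {a b c : Λ} (hab : a ≤ b) (hbc : b ≤ c) (x : G c),
      p hab (p hbc x) = p (hab.trans hbc) x

attribute [instance] InvSys.inst

/-- `Λ^{(n)}`: the ≤-ordered `(n+1)`-tuples of `Λ`. -/
def Tup (Λ : Type u) [Preorder Λ] (n : ℕ) : Type u :=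
  {f : Fin (n + 1) → Λ // Monotone f}

variable {Λ : Type u} [Preorder Λ]

/-- `G^{(n)}`: functions assigning to each tuple `λ̄ ∈ Λ^{(n)}` an element of `G_{λ_0}`. -/
def InvSys.Cochain (S : InvSys.{u, v} Λ) (n : ℕ) : Type max u v :=
  ∀ t : Tup Λ n, S.G (t.1 0)

instance (S : InvSys.{u, v} Λ) (n : ℕ) : AddCommGroup (S.Cochain n) :=
  inferInstanceAs (AddCommGroup (∀ t : Tup Λ n, S.G (t.1 0)))

/-- The tuple `λ̄^i` obtained by omitting the `i`-th coordinate. -/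
def Tup.face {n : ℕ} (t : Tup Λ (n + 1)) (i : Fin (n + 2)) : Tup Λ n :=
  ⟨t.1 ∘ i.succAbove, t.2.comp (Fin.strictMono_succAbove i).monotone⟩

/-- The coboundary map `δ^{n+1} : G^{(n)} → G^{(n+1)}`,
`δ(x)_{λ̄} = Σ_{1≤i≤n+1} (-1)^i x_{λ̄^i} + p^{λ_1}_{λ_0}(x_{λ̄^0})`
(the `i = 0` term carries the bonding map `p^{λ_1}_{λ_0}`, and for `i ≥ 1` the bonding
map `p^{λ_0}_{λ_0}` is the identity). -/
def InvSys.coboundary (S : InvSys.{u, v} Λ) (n : ℕ) (x : S.Cochain n) : S.Cochain (n + 1) :=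
  fun t => ∑ i : Fin (n + 2),
    ((-1 : ℤ) ^ (i : ℕ)) • S.p (t.2 (Fin.zero_le (i.succAbove 0))) (x (t.face i))


/-- The restriction of an inverse system to a subset `C` of the index set. -/
def InvSys.restrict (S : InvSys.{u, v} Λ) (C : Set Λ) : InvSys.{u, v} C where
  G c := S.G c.1
  inst c := S.inst c.1
  p h := S.p h
  p_refl a h x := S.p_refl a.1 h x
  p_comp hab hbc x := S.p_comp hab hbc x

/-- Transport a tuple of `Λ` to a tuple of `C` along an increasing map `s : Λ → C`. -/
def mapTup {C : Set Λ} (s : Λ → Λ) (hsC : ∀ a, s a ∈ C) (hsmono : Monotone s)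
    {n : ℕ} (t : Tup Λ n) : Tup C n :=
  ⟨fun i => ⟨s (t.1 i), hsC _⟩, fun _ _ h => hsmono (t.2 h)⟩

/-- The inclusion of tuples of `C` into tuples of `Λ`. -/
def embTup {C : Set Λ} {n : ℕ} (t : Tup C n) : Tup Λ n :=
  ⟨fun i => (t.1 i).1, fun _ _ h => t.2 h⟩

/-!
Statement 6: Let `Λ` be a directed set, `G` a `Λ`-inverse system of abelian groups and
`C ⊆ Λ` a cofinal, linearly ordered and well-ordered subset.  Every coherent element
`x` of `(G ↾ C)^{(n)}` extends to a coherent element `z` of `G^{(n)}` with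
`z ↾ C^{(n)} = x`, the extension being given by
`z_{λ_0,…,λ_n} = p^{s(λ_0)}_{λ_0}(x_{s(λ_0),…,s(λ_n)})`,
where `s(λ)` is the least element of `C` above `λ`.
-/
theorem coherent_extension_of_cofinal_chain [IsDirected Λ (· ≤ ·)]
    (S : InvSys.{u, v} Λ) (C : Set Λ)
    (hcof : ∀ a : Λ, ∃ b ∈ C, a ≤ b)
    (hlin : ∀ a ∈ C, ∀ b ∈ C, a ≤ b ∨ b ≤ a)
    (hwo : C.WellFoundedOn (· < ·))
    (s : Λ → Λ) (hsC : ∀ a, s a ∈ C) (hle : ∀ a, a ≤ s a)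
    (hleast : ∀ a, ∀ c ∈ C, a ≤ c → s a ≤ c)
    (hid : ∀ c ∈ C, s c = c) (hsmono : Monotone s)
    (n : ℕ) (x : (S.restrict C).Cochain n)
    (hx : (S.restrict C).coboundary n x = 0) :
    ∃ z : S.Cochain n,
      (∀ t : Tup Λ n, z t = S.p (hle (t.1 0)) (x (mapTup s hsC hsmono t))) ∧
      S.coboundary n z = 0 ∧
      (∀ t : Tup C n, z (embTup t) = x t) := by
  classical
  refine ⟨fun t => S.p (hle (t.1 0)) (x (mapTup s hsC hsmono t)), fun t => rfl, ?_, ?_⟩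
  · funext t
    have hx0 : (S.restrict C).coboundary n x (mapTup s hsC hsmono t) = 0 := congrFun hx _
    have key : S.coboundary n
        (fun t => S.p (hle (t.1 0)) (x (mapTup s hsC hsmono t))) t
        = S.p (hle (t.1 0)) ((S.restrict C).coboundary n x (mapTup s hsC hsmono t)) := by
      show _ = S.p (hle (t.1 0)) (∑ i : Fin (n + 2), ((-1 : ℤ) ^ (i : ℕ)) •
        (S.restrict C).p ((mapTup s hsC hsmono t).2 (Fin.zero_le (i.succAbove 0)))
          (x ((mapTup s hsC hsmono t).face i)))
      refine Eq.trans ?_ (map_sum (S.p (hle (t.1 0))) _ _).symm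
      refine Finset.sum_congr rfl fun i _ => ?_
      refine Eq.trans ?_ (map_zsmul _ _ _).symm
      congr 1
      show S.p (t.2 (Fin.zero_le (i.succAbove 0)))
          (S.p (hle ((t.face i).1 0)) (x (mapTup s hsC hsmono (t.face i)))) =
        S.p (hle (t.1 0))
        (S.p ((mapTup s hsC hsmono t).2 (Fin.zero_le (i.succAbove 0)))
          (x ((mapTup s hsC hsmono t).face i)))
      exact (S.p_comp _ _ _).trans (S.p_comp _ _ _).symm
    rw [key, hx0]
    exact (map_zero _).trans rfl
  · intro t
    have heq : mapTup s hsC hsmono (embTup t) = t := by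
      apply Subtype.ext
      funext i
      exact Subtype.ext (hid _ (t.1 i).2)
    have hc : s ((embTup t).1 0) = ((embTup t).1 0) := hid _ (t.1 0).2
    have h2 : HEq (x (mapTup s hsC hsmono (embTup t))) (x t) := by rw [heq]
    have h1 : ∀ (b : Λ) (hb : (embTup t).1 0 ≤ b) (hbe : b = (embTup t).1 0)
        (y : S.G b), S.p hb y = hbe ▸ y := by
      rintro b hb rfl y
      exact S.p_refl _ _ y
    show S.p (hle ((embTup t).1 0)) (x (mapTup s hsC hsmono (embTup t))) = x t
    refine (h1 _ (hle _) hc _).trans ?_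
    exact eq_of_heq ((eqRec_heq _ _).trans h2)
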